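/- Smith's learning rule T_{ij}(x,p) = max(0, p_j - p_i) induces a mean dynamic V_i(x,p) = sum_j [x_j max(0, p_i - p_j) - x_i max(0, p_j - p_i)] that satisfies positive correlation: for all x in the simplex X and p in R^n, p'V(x,p) >= 0, with equality if and only if V(x,p) = 0. -/
import Mathlib


open scoped BigOperators

/-- The probability simplex in `ℝ^n`. -/
def simplex (n : ℕ) : Set (Fin n → ℝ) := stdSimplex ℝ (Fin n)

/-- Dot product `p'x`. -/
def dot {n : ℕ} (p x : Fin n → ℝ) : ℝ := ∑ i, p i * x i

/-- Mean dynamic induced by Smith's learning rule `T_ij(x,p) = [p_j - p_i]_+`. -/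
def smithV {n : ℕ} (x p : Fin n → ℝ) : Fin n → ℝ :=
  fun i => ∑ j, (x j * max 0 (p i - p j) - x i * max 0 (p j - p i))

lemma smith_key {n : ℕ} (x p : Fin n → ℝ) :
    dot p (smithV x p) = ∑ i, ∑ j, x j * (max 0 (p i - p j))^2 := by
  unfold dot smithV
  have h1 : ∑ i, p i * ∑ j, (x j * max 0 (p i - p j) - x i * max 0 (p j - p i))
      = ∑ i, ∑ j, (p i * (x j * max 0 (p i - p j)) - p i * (x i * max 0 (p j - p i))) := by
    simp [Finset.mul_sum, mul_sub]
  rw [h1]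
  simp only [Finset.sum_sub_distrib]
  have h2 : ∑ i, ∑ j, p i * (x i * max 0 (p j - p i))
      = ∑ i, ∑ j, p j * (x j * max 0 (p i - p j)) := Finset.sum_comm
  rw [h2, ← Finset.sum_sub_distrib]
  refine Finset.sum_congr rfl fun i _ => ?_
  rw [← Finset.sum_sub_distrib]
  refine Finset.sum_congr rfl fun j _ => ?_
  rcases le_total (p i - p j) 0 with h | h
  · rw [max_eq_left h]; ring
  · rw [max_eq_right h]; nlinarith

theorem stmt_4 {n : ℕ} (x p : Fin n → ℝ) (hx : x ∈ simplex n) :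
    0 ≤ dot p (smithV x p) ∧ (dot p (smithV x p) = 0 ↔ smithV x p = 0) := by
  obtain ⟨hx0, -⟩ := hx
  have hterm : ∀ i j : Fin n, 0 ≤ x j * (max 0 (p i - p j))^2 := fun i j =>
    mul_nonneg (hx0 j) (sq_nonneg _)
  have hnn : 0 ≤ dot p (smithV x p) := by
    rw [smith_key]
    exact Finset.sum_nonneg fun i _ => Finset.sum_nonneg fun j _ => hterm i j
  refine ⟨hnn, ?_, ?_⟩
  · intro h0
    rw [smith_key] at h0
    have hall : ∀ i j : Fin n, x j * (max 0 (p i - p j))^2 = 0 := by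
      intro i j
      have h1 := (Finset.sum_eq_zero_iff_of_nonneg
        (fun i _ => Finset.sum_nonneg fun j _ => hterm i j)).mp h0 i (Finset.mem_univ i)
      exact (Finset.sum_eq_zero_iff_of_nonneg
        (fun j _ => hterm i j)).mp h1 j (Finset.mem_univ j)
    have hall' : ∀ i j : Fin n, x j * max 0 (p i - p j) = 0 := by
      intro i j
      rcases mul_eq_zero.mp (hall i j) with h | h
      · rw [h, zero_mul]
      · rw [pow_eq_zero_iff (by norm_num) |>.mp h, mul_zero]
    funext i
    show (∑ j, (x j * max 0 (p i - p j) - x i * max 0 (p j - p i))) = 0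
    refine Finset.sum_eq_zero fun j _ => ?_
    rw [hall' i j, hall' j i, sub_zero]
  · intro h
    unfold dot
    simp [h]
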